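/- arXiv:1204.2982 — 5 statements merged into one kernel-verified Lean document; each statement's English description precedes it below -/
import Mathlib

section
/- With ρ(t) := (s·ln γ)/(4c) · 1/√(1 - G(t)²), for every T ∈ [-1,1] one has ∫₀ᵀ ρ(t)·(G(T) - G(t)) dt = (s/(2c))·(1 - √(1 - G(T)²)), where s = √(1-c²). -/
open Real

theorem rho_integral_equation (c : ℝ) (hc : c ∈ Set.Ioo (0:ℝ) 1)
    (s : ℝ) (hs : s = Real.sqrt (1 - c ^ 2))
    (γ : ℝ) (hγ : γ = (1 + c) / (1 - c))
    (G : ℝ → ℝ) (hG : ∀ t : ℝ, G t = (γ ^ t - 1) / (γ ^ t + 1))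
    (ρ : ℝ → ℝ) (hρ : ∀ t : ℝ, ρ t = s * Real.log γ / (4 * c) * (1 / Real.sqrt (1 - G t ^ 2))) :
    ∀ T ∈ Set.Icc (-1 : ℝ) 1,
      ∫ t in (0 : ℝ)..T, ρ t * (G T - G t)
        = s / (2 * c) * (1 - Real.sqrt (1 - G T ^ 2)) := by
  obtain ⟨hc0, hc1⟩ := hc
  have hγ0 : 0 < γ := by
    rw [hγ]; exact div_pos (by linarith) (by linarith)
  set k : ℝ := Real.log γ / 2 with hk
  have hlog : Real.log γ = 2 * k := by rw [hk]; ring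
  -- tanh in terms of exp
  have htanh : ∀ x : ℝ, Real.tanh x = (Real.exp (2 * x) - 1) / (Real.exp (2 * x) + 1) := by
    intro x
    have h1 : Real.exp (2 * x) = Real.exp x * Real.exp x := by
      rw [← Real.exp_add]; ring_nf
    have h2 : Real.exp (-x) = 1 / Real.exp x := by
      rw [Real.exp_neg, inv_eq_one_div]
    have hex : (0:ℝ) < Real.exp x := Real.exp_pos x
    rw [Real.tanh_eq_sinh_div_cosh, Real.sinh_eq, Real.cosh_eq, h1, h2]
    have hden : Real.exp x * Real.exp x + 1 ≠ 0 := by positivity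
    field_simp
    all_goals ring
  have hGt : ∀ t : ℝ, G t = Real.tanh (k * t) := by
    intro t
    have harg : Real.log γ * t = 2 * (k * t) := by rw [hlog]; ring
    rw [hG, htanh, Real.rpow_def_of_pos hγ0, harg]
  have hcosh_pos : ∀ x : ℝ, 0 < Real.cosh x := Real.cosh_pos
  have hsq : ∀ x : ℝ, 1 - Real.tanh x ^ 2 = (1 / Real.cosh x) ^ 2 := by
    intro x
    have h := Real.cosh_sq_sub_sinh_sq x
    have hc' : Real.cosh x ≠ 0 := (hcosh_pos x).ne'
    rw [Real.tanh_eq_sinh_div_cosh]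
    field_simp
    all_goals nlinarith [h]
  have hsqrt : ∀ x : ℝ, Real.sqrt (1 - Real.tanh x ^ 2) = 1 / Real.cosh x := by
    intro x
    rw [hsq x]
    exact Real.sqrt_sq (by positivity)
  have hρt : ∀ t : ℝ, ρ t = s * k / (2 * c) * Real.cosh (k * t) := by
    intro t
    rw [hρ, hGt, hsqrt, hlog]
    have hc' : Real.cosh (k * t) ≠ 0 := (hcosh_pos _).ne'
    field_simp
    all_goals ring
  intro T hT
  have hpoint : ∀ t : ℝ, ρ t * (G T - G t)
      = s / (2 * c) * (G T * (Real.cosh (k * t) * k) - Real.sinh (k * t) * k) := by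
    intro t
    have hc' : Real.cosh (k * t) ≠ 0 := (hcosh_pos _).ne'
    rw [hρt t, hGt t, Real.tanh_eq_sinh_div_cosh]
    field_simp
    all_goals ring
  -- antiderivative
  set F : ℝ → ℝ := fun t => s / (2 * c) * (G T * Real.sinh (k * t) - Real.cosh (k * t)) with hF
  have hderiv : ∀ t : ℝ, HasDerivAt F (ρ t * (G T - G t)) t := by
    intro t
    have hid : HasDerivAt (fun x : ℝ => k * x) k t := by
      simpa using (hasDerivAt_id t).const_mul k
    have hsinh : HasDerivAt (fun x : ℝ => Real.sinh (k * x)) (Real.cosh (k * t) * k) t :=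
      (Real.hasDerivAt_sinh (k * t)).comp t hid
    have hcosh : HasDerivAt (fun x : ℝ => Real.cosh (k * x)) (Real.sinh (k * t) * k) t :=
      (Real.hasDerivAt_cosh (k * t)).comp t hid
    rw [hpoint t]
    exact ((hsinh.const_mul (G T)).sub hcosh).const_mul (s / (2 * c))
  have hcont : Continuous (fun t : ℝ => ρ t * (G T - G t)) := by
    have heq : (fun t : ℝ => ρ t * (G T - G t))
        = fun t : ℝ => s / (2 * c) * (G T * (Real.cosh (k * t) * k) - Real.sinh (k * t) * k) :=
      funext hpoint
    rw [heq]
    fun_prop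
  have hint := intervalIntegral.integral_eq_sub_of_hasDerivAt
    (fun t _ => hderiv t) (hcont.intervalIntegrable 0 T)
  rw [hint]
  have h0 : k * 0 = 0 := by ring
  have hc' : Real.cosh (k * T) ≠ 0 := (hcosh_pos _).ne'
  have hid := Real.cosh_sq_sub_sinh_sq (k * T)
  have hkey : Real.tanh (k * T) * Real.sinh (k * T) - Real.cosh (k * T)
      = -(1 / Real.cosh (k * T)) := by
    rw [Real.tanh_eq_sinh_div_cosh]
    field_simp
    all_goals nlinarith [hid]
  rw [hF]
  simp only [h0, Real.sinh_zero, Real.cosh_zero, mul_zero, zero_sub]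
  rw [hGt T, hsqrt]
  linear_combination s / (2 * c) * hkey
end

section
/- For c ∈ (0,1), a_z ∈ [-1,1], the function ρ_a(t) := (1 + G(t)·a_z)·ρ(t) with ρ(t) := (s·ln γ)/(4c)/√(1 - G(t)²) is a probability density on [-1,1]: it is nonnegative and integrates to 1. -/
set_option maxHeartbeats 1000000


open Real

theorem rho_a_is_density (c : ℝ) (hc : c ∈ Set.Ioo (0:ℝ) 1)
    (s : ℝ) (hs : s = Real.sqrt (1 - c ^ 2))
    (γ : ℝ) (hγ : γ = (1 + c) / (1 - c))
    (G : ℝ → ℝ) (hG : ∀ t : ℝ, G t = (γ ^ t - 1) / (γ ^ t + 1))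
    (ρ : ℝ → ℝ) (hρ : ∀ t : ℝ, ρ t = s * Real.log γ / (4 * c) * (1 / Real.sqrt (1 - G t ^ 2)))
    (az : ℝ) (haz : az ∈ Set.Icc (-1 : ℝ) 1)
    (ρa : ℝ → ℝ) (hρa : ∀ t : ℝ, ρa t = (1 + G t * az) * ρ t) :
    (∀ t ∈ Set.Icc (-1 : ℝ) 1, 0 ≤ ρa t) ∧
      ∫ t in (-1 : ℝ)..1, ρa t = 1 := by
  obtain ⟨hc0, hc1⟩ := hc
  obtain ⟨haz1, haz2⟩ := haz
  have h1c : (0:ℝ) < 1 - c := by linarith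
  have hγ1 : 1 < γ := by
    rw [hγ, lt_div_iff₀ h1c]; linarith
  have hγ0 : 0 < γ := lt_trans one_pos hγ1
  set L := Real.log γ with hL
  have hL0 : 0 < L := Real.log_pos hγ1
  clear_value L
  have hs0 : 0 < s := by
    rw [hs]; apply Real.sqrt_pos.2; nlinarith
  have hs2 : s ^ 2 = 1 - c ^ 2 := by
    rw [hs, Real.sq_sqrt]; nlinarith
  -- key rewriting of ρa in terms of exponentials
  have key : ∀ t : ℝ, ρa t = s * L / (4 * c) *
      ((1 + az) / 2 * Real.exp (t * (L / 2)) + (1 - az) / 2 * Real.exp (-(t * (L / 2)))) := by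
    intro t
    have hE0 : 0 < Real.exp (t * (L / 2)) := Real.exp_pos _
    set E := Real.exp (t * (L / 2)) with hEdef
    have hγt : γ ^ t = E ^ 2 := by
      rw [Real.rpow_def_of_pos hγ0, ← hL, hEdef, ← Real.exp_nat_mul]
      ring_nf
    have hGt : G t = (E ^ 2 - 1) / (E ^ 2 + 1) := by rw [hG, hγt]
    have hden : (0:ℝ) < E ^ 2 + 1 := by positivity
    have hsq : 1 - G t ^ 2 = (2 * E / (E ^ 2 + 1)) ^ 2 := by
      rw [hGt]; field_simp; ring
    have hsqrt : Real.sqrt (1 - G t ^ 2) = 2 * E / (E ^ 2 + 1) := by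
      rw [hsq, Real.sqrt_sq (by positivity)]
    have hEneg : Real.exp (-(t * (L / 2))) = E⁻¹ := by
      rw [Real.exp_neg, hEdef]
    rw [hρa, hρ, hsqrt, hGt, hEneg]
    field_simp
    ring
  constructor
  · intro t _
    rw [key t]
    have h1 : 0 ≤ (1 + az) / 2 := by linarith
    have h2 : 0 ≤ (1 - az) / 2 := by linarith
    have := Real.exp_pos (t * (L / 2))
    have := Real.exp_pos (-(t * (L / 2)))
    positivity
  · have hd0 : (L / 2) ≠ 0 := by positivity
    have hI1 : ∫ t in (-1:ℝ)..1, Real.exp (t * (L / 2)) =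
        (L / 2)⁻¹ * (Real.exp (L / 2) - Real.exp (-(L / 2))) := by
      rw [intervalIntegral.integral_comp_mul_right Real.exp hd0, integral_exp]
      norm_num
    have hI2 : ∫ t in (-1:ℝ)..1, Real.exp (-(t * (L / 2))) =
        (L / 2)⁻¹ * (Real.exp (L / 2) - Real.exp (-(L / 2))) := by
      have heq : ∀ t : ℝ, Real.exp (-(t * (L / 2))) = Real.exp (t * (-(L / 2))) := by
        intro t; ring_nf
      simp_rw [heq]
      rw [intervalIntegral.integral_comp_mul_right Real.exp (neg_ne_zero.mpr hd0), integral_exp]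
      have : (-1:ℝ) * -(L/2) = L/2 := by ring
      rw [this]
      have : (1:ℝ) * -(L/2) = -(L/2) := by ring
      rw [this]
      rw [smul_eq_mul, inv_neg]
      ring
    have hint1 : IntervalIntegrable (fun t : ℝ => (1 + az) / 2 * Real.exp (t * (L / 2)))
        MeasureTheory.volume (-1) 1 :=
      (Continuous.intervalIntegrable (by continuity) _ _)
    have hint2 : IntervalIntegrable (fun t : ℝ => (1 - az) / 2 * Real.exp (-(t * (L / 2))))
        MeasureTheory.volume (-1) 1 :=
      (Continuous.intervalIntegrable (by continuity) _ _)
    simp_rw [key]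
    rw [intervalIntegral.integral_const_mul, intervalIntegral.integral_add hint1 hint2,
      intervalIntegral.integral_const_mul, intervalIntegral.integral_const_mul, hI1, hI2]
    -- now compute exp (L/2)
    have hu : Real.exp (L / 2) = s / (1 - c) := by
      have hu0 : 0 < Real.exp (L / 2) := Real.exp_pos _
      have hu2 : Real.exp (L / 2) ^ 2 = γ := by
        rw [← Real.exp_nat_mul]
        have : (2:ℕ) * (L / 2) = L := by push_cast; ring
        rw [this, hL, Real.exp_log hγ0]
      have hv0 : 0 < s / (1 - c) := by positivity
      have hv2 : (s / (1 - c)) ^ 2 = γ := by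
        rw [div_pow, hs2, hγ]
        rw [div_eq_div_iff (by positivity) (by linarith)]
        ring
      have h2 : Real.exp (L / 2) ^ 2 = (s / (1 - c)) ^ 2 := hu2.trans hv2.symm
      have h3 := congrArg Real.sqrt h2
      rwa [Real.sqrt_sq hu0.le, Real.sqrt_sq hv0.le] at h3
    have hun : Real.exp (-(L / 2)) = (1 - c) / s := by
      rw [Real.exp_neg, hu, inv_div]
    rw [hu, hun]
    have hX : s * (s / (1 - c) - (1 - c) / s) = 2 * c := by
      field_simp
      nlinarith [hs2]
    have hfac : s * L / (4 * c) * ((1 + az) / 2 * ((L / 2)⁻¹ * (s / (1 - c) - (1 - c) / s)) +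
        (1 - az) / 2 * ((L / 2)⁻¹ * (s / (1 - c) - (1 - c) / s))) =
        s * (s / (1 - c) - (1 - c) / s) * (L * (L / 2)⁻¹) / (4 * c) := by ring
    have hLL : L * (L / 2)⁻¹ = 2 := by
      field_simp
    rw [hfac, hX, hLL]
    field_simp
    ring
end

section
/- For c ∈ (0,1) and a_z ∈ [-1,1], ∫₋₁¹ ρ_a(t)·a_z(t) dt = a_z, where ρ_a(t) := (1 + G(t)·a_z)·ρ(t), a_z(t) := (a_z + G(t))/(1 + G(t)·a_z), and ρ(t) := (s·ln γ)/(4c)/√(1 - G(t)²). -/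
set_option maxHeartbeats 2000000
open Real

theorem rho_a_marginal (c : ℝ) (hc : c ∈ Set.Ioo (0:ℝ) 1)
    (s : ℝ) (hs : s = Real.sqrt (1 - c ^ 2))
    (γ : ℝ) (hγ : γ = (1 + c) / (1 - c))
    (G : ℝ → ℝ) (hG : ∀ t : ℝ, G t = (γ ^ t - 1) / (γ ^ t + 1))
    (ρ : ℝ → ℝ) (hρ : ∀ t : ℝ, ρ t = s * Real.log γ / (4 * c) * (1 / Real.sqrt (1 - G t ^ 2)))
    (az : ℝ) (haz : az ∈ Set.Icc (-1 : ℝ) 1)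
    (ρa : ℝ → ℝ) (hρa : ∀ t : ℝ, ρa t = (1 + G t * az) * ρ t) :
    ∫ t in (-1 : ℝ)..1, ρa t * ((az + G t) / (1 + G t * az)) = az := by
  obtain ⟨hc0, hc1⟩ := hc
  obtain ⟨haz1, haz2⟩ := haz
  have h1c : (0:ℝ) < 1 - c := by linarith
  have h1c' : (0:ℝ) < 1 + c := by linarith
  have hγ1 : 1 < γ := by
    rw [hγ]; rw [lt_div_iff₀ h1c]; linarith
  have hγ0 : 0 < γ := by linarith
  have hlog : 0 < Real.log γ := Real.log_pos hγ1
  set L : ℝ := Real.log γ / 2 with hL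
  have hL0 : 0 < L := by positivity
  have hs2 : s ^ 2 = 1 - c ^ 2 := by
    rw [hs, Real.sq_sqrt]; nlinarith
  have hs0 : 0 < s := by
    rw [hs]; apply Real.sqrt_pos.mpr; nlinarith
  -- exp L = sqrt γ
  have hexpL : Real.exp L = Real.sqrt γ := by
    have h : (Real.exp L) ^ 2 = γ := by
      rw [← Real.exp_nat_mul]
      have : (2:ℝ) * L = Real.log γ := by rw [hL]; ring
      push_cast
      rw [this, Real.exp_log hγ0]
    rw [← h, Real.sqrt_sq (Real.exp_pos L).le]
  have hsγ : s * Real.sqrt γ = 1 + c := by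
    have h1 : (s * Real.sqrt γ) ^ 2 = (1 + c) ^ 2 := by
      rw [mul_pow, hs2, Real.sq_sqrt hγ0.le, hγ]
      field_simp
      ring
    have h2 : 0 ≤ s * Real.sqrt γ := by positivity
    nlinarith [Real.sqrt_nonneg γ]
  have hsinhL : Real.sinh L = c / s := by
    rw [Real.sinh_eq, hexpL, Real.exp_neg, hexpL]
    have hsq : Real.sqrt γ = (1 + c) / s := by
      field_simp at hsγ ⊢; linarith [hsγ]
    rw [hsq]
    rw [div_eq_div_iff (by norm_num) hs0.ne']
    field_simp
    nlinarith [hs2]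
  -- pointwise identity
  have key : ∀ t : ℝ, ρa t * ((az + G t) / (1 + G t * az))
      = s * Real.log γ / (4 * c) * (az * Real.cosh (t * L) + Real.sinh (t * L)) := by
    intro t
    set u := t * L with hu
    set e := Real.exp u with he
    have he0 : 0 < e := Real.exp_pos u
    have hE : γ ^ t = e ^ 2 := by
      rw [Real.rpow_def_of_pos hγ0, he, ← Real.exp_nat_mul]
      congr 1
      push_cast
      rw [hu, hL]; ring
    have hGt : G t = (e ^ 2 - 1) / (e ^ 2 + 1) := by rw [hG, hE]
    have hden : (0:ℝ) < e ^ 2 + 1 := by positivity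
    have h1G : 1 - G t ^ 2 = (2 * e / (e ^ 2 + 1)) ^ 2 := by
      rw [hGt]; field_simp; ring
    have hsqrt : Real.sqrt (1 - G t ^ 2) = 2 * e / (e ^ 2 + 1) := by
      rw [h1G, Real.sqrt_sq (by positivity)]
    have hcosh : Real.cosh u = (e ^ 2 + 1) / (2 * e) := by
      rw [Real.cosh_eq, Real.exp_neg, ← he]
      field_simp
    have hsinh : Real.sinh u = (e ^ 2 - 1) / (2 * e) := by
      rw [Real.sinh_eq, Real.exp_neg, ← he]
      field_simp
    have habsG : |G t| < 1 := by
      rw [hGt, abs_div, abs_of_pos hden, div_lt_one hden]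
      rw [abs_lt]; constructor <;> nlinarith
    have hpos : 0 < 1 + G t * az := by
      have : |G t * az| < 1 := by
        rw [abs_mul]
        calc |G t| * |az| ≤ |G t| * 1 := by
              apply mul_le_mul_of_nonneg_left _ (abs_nonneg _)
              rw [abs_le]; exact ⟨haz1, haz2⟩
          _ < 1 := by rw [mul_one]; exact habsG
      have := (abs_lt.mp this).1
      linarith
    have hne : (1 + G t * az) ≠ 0 := hpos.ne'
    have hcancel : ρa t * ((az + G t) / (1 + G t * az)) = ρ t * (az + G t) := by
      rw [hρa]
      field_simp
    rw [hcancel, hρ, hsqrt, hcosh, hsinh, hGt]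
    set K := s * Real.log γ / (4 * c) with hK
    rw [mul_assoc]
    congr 1
    field_simp
  rw [intervalIntegral.integral_congr (fun t _ => key t)]
  -- antiderivative
  set K : ℝ := s * Real.log γ / (4 * c) with hK
  have hderiv : ∀ t ∈ Set.uIcc (-1:ℝ) 1,
      HasDerivAt (fun t => K / L * (az * Real.sinh (t * L) + Real.cosh (t * L)))
        (K * (az * Real.cosh (t * L) + Real.sinh (t * L))) t := by
    intro t _
    have h1 : HasDerivAt (fun t : ℝ => t * L) L t := by
      simpa using (hasDerivAt_id t).mul_const L
    have h2 := h1.sinh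
    have h3 := h1.cosh
    have h4 := ((h2.const_mul az).add h3).const_mul (K / L)
    convert h4 using 1
    · rfl
    · rfl
    · rfl
    rw [div_mul_eq_mul_div K L, eq_div_iff hL0.ne', hK]
    ring
  have hcont : IntervalIntegrable
      (fun t => K * (az * Real.cosh (t * L) + Real.sinh (t * L)))
      MeasureTheory.volume (-1 : ℝ) 1 := by
    apply Continuous.intervalIntegrable
    continuity
  rw [intervalIntegral.integral_eq_sub_of_hasDerivAt hderiv hcont]
  simp only [one_mul, neg_one_mul, neg_mul, Real.sinh_neg, Real.cosh_neg]
  rw [hsinhL, hK, hL]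
  field_simp
  ring
end

section
/- Fix c ∈ (0,1), s = √(1-c²), a_z ∈ (-1,1), and T ∈ [-1,1]; set b_z := (a_z + G(T))/(1 + G(T)·a_z). Then with ρ_a(t) := (1 + G(t)·a_z)·ρ(t) and a_z(t) := (a_z + G(t))/(1 + G(t)·a_z), one has a_z·b_z + s·√(1-a_z²)·√(1-b_z²) - c·(1 - ∫₋₁¹ ρ_a(t)·|a_z(t) - b_z| dt) = 1 - c. -/
open Real

lemma my_tanh_eq (x : ℝ) : Real.tanh x = (Real.exp (2*x) - 1) / (Real.exp (2*x) + 1) := by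
  rw [Real.tanh_eq_sinh_div_cosh, Real.sinh_eq, Real.cosh_eq,
    show (2:ℝ)*x = x + x by ring, Real.exp_add, Real.exp_neg]
  have h1 : Real.exp x ≠ 0 := (Real.exp_pos x).ne'
  have h2 : (0:ℝ) < Real.exp x * Real.exp x + 1 := by positivity
  have h3 : (0:ℝ) < Real.exp x + (Real.exp x)⁻¹ := by positivity
  field_simp

lemma my_abs_sinh_lt_cosh (x : ℝ) : |Real.sinh x| < Real.cosh x := by
  have h1 := Real.cosh_sq_sub_sinh_sq x
  have h2 := Real.cosh_pos x
  rw [abs_lt]; constructor <;> nlinarith [sq_abs (Real.sinh x), abs_nonneg (Real.sinh x)]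

lemma my_abs_tanh_lt_one (x : ℝ) : |Real.tanh x| < 1 := by
  have h2 := Real.cosh_pos x
  rw [Real.tanh_eq_sinh_div_cosh, abs_div, abs_of_pos h2, div_lt_one h2]
  exact my_abs_sinh_lt_cosh x

lemma my_one_sub_tanh_sq (x : ℝ) : 1 - Real.tanh x ^ 2 = 1 / Real.cosh x ^ 2 := by
  have h1 := Real.cosh_sq_sub_sinh_sq x
  have h2 := (Real.cosh_pos x).ne'
  rw [Real.tanh_eq_sinh_div_cosh, div_pow]
  field_simp
  exact h1

lemma my_sqrt_one_sub_tanh_sq (x : ℝ) :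
    Real.sqrt (1 - Real.tanh x ^ 2) = 1 / Real.cosh x := by
  rw [my_one_sub_tanh_sq, one_div, Real.sqrt_inv, Real.sqrt_sq (Real.cosh_pos x).le, one_div]

lemma my_integral_abs_sinh (θ T : ℝ) (hθ : 0 < θ) (hT : T ∈ Set.Icc (-1:ℝ) 1) :
    ∫ t in (-1:ℝ)..1, |Real.sinh (θ * (t - T))| =
      (2 * Real.cosh θ * Real.cosh (θ * T) - 2) / θ := by
  have hcont : Continuous fun t : ℝ => |Real.sinh (θ * (t - T))| := by continuity
  have key : ∀ a b : ℝ, ∫ t in a..b, Real.sinh (θ*(t-T)) =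
      (Real.cosh (θ*(b-T)) - Real.cosh (θ*(a-T)))/θ := by
    intro a b
    have h : ∀ t : ℝ, HasDerivAt (fun u => Real.cosh (θ*(u-T))/θ) (Real.sinh (θ*(t-T))) t := by
      intro t
      have h1 : HasDerivAt (fun u : ℝ => θ*(u-T)) θ t := by
        simpa using ((hasDerivAt_id t).sub_const T).const_mul θ
      have h3 := ((Real.hasDerivAt_cosh (θ*(t-T))).comp t h1).div_const θ
      refine h3.congr_deriv ?_
      rw [mul_div_assoc, div_self hθ.ne', mul_one]
    rw [intervalIntegral.integral_eq_sub_of_hasDerivAt (fun t _ => h t)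
      ((Real.continuous_sinh.comp (by continuity)).intervalIntegrable a b)]
    ring
  have hsplit : (∫ t in (-1:ℝ)..T, |Real.sinh (θ*(t-T))|) +
      (∫ t in T..(1:ℝ), |Real.sinh (θ*(t-T))|) = ∫ t in (-1:ℝ)..1, |Real.sinh (θ*(t-T))| :=
    intervalIntegral.integral_add_adjacent_intervals (hcont.intervalIntegrable _ _)
      (hcont.intervalIntegrable _ _)
  have h1 : (∫ t in (-1:ℝ)..T, |Real.sinh (θ*(t-T))|) =
      ∫ t in (-1:ℝ)..T, -Real.sinh (θ*(t-T)) := by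
    apply intervalIntegral.integral_congr
    intro t ht
    rw [Set.uIcc_of_le hT.1] at ht
    show |Real.sinh (θ*(t-T))| = -Real.sinh (θ*(t-T))
    rw [abs_of_nonpos (by rw [Real.sinh_nonpos_iff]; nlinarith [ht.2])]
  have h2 : (∫ t in T..(1:ℝ), |Real.sinh (θ*(t-T))|) =
      ∫ t in T..(1:ℝ), Real.sinh (θ*(t-T)) := by
    apply intervalIntegral.integral_congr
    intro t ht
    rw [Set.uIcc_of_le hT.2] at ht
    show |Real.sinh (θ*(t-T))| = Real.sinh (θ*(t-T))
    rw [abs_of_nonneg]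
    rw [Real.sinh_nonneg_iff]
    nlinarith [ht.1]
  rw [← hsplit, h1, h2, intervalIntegral.integral_neg, key, key]
  have e1 : θ*(T-T) = 0 := by ring
  have e2 : θ*(-1-T) = -(θ*(1+T)) := by ring
  have e3 : θ*(1+T) = θ + θ*T := by ring
  have e4 : θ*(1-T) = θ - θ*T := by ring
  rw [e1, e2, Real.cosh_neg, Real.cosh_zero, e3, e4, Real.cosh_add, Real.cosh_sub]
  field_simp
  ring

theorem epr2_saturation (c : ℝ) (hc : c ∈ Set.Ioo (0:ℝ) 1)
    (s : ℝ) (hs : s = Real.sqrt (1 - c ^ 2))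
    (γ : ℝ) (hγ : γ = (1 + c) / (1 - c))
    (G : ℝ → ℝ) (hG : ∀ t : ℝ, G t = (γ ^ t - 1) / (γ ^ t + 1))
    (ρ : ℝ → ℝ) (hρ : ∀ t : ℝ, ρ t = s * Real.log γ / (4 * c) * (1 / Real.sqrt (1 - G t ^ 2)))
    (az : ℝ) (haz : az ∈ Set.Ioo (-1 : ℝ) 1)
    (T : ℝ) (hT : T ∈ Set.Icc (-1 : ℝ) 1)
    (bz : ℝ) (hbz : bz = (az + G T) / (1 + G T * az))
    (ρa : ℝ → ℝ) (hρa : ∀ t : ℝ, ρa t = (1 + G t * az) * ρ t) :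
    az * bz + s * Real.sqrt (1 - az ^ 2) * Real.sqrt (1 - bz ^ 2)
      - c * (1 - ∫ t in (-1 : ℝ)..1, ρa t * |(az + G t) / (1 + G t * az) - bz|)
      = 1 - c := by
  obtain ⟨hc0, hc1⟩ := hc
  obtain ⟨haz1, haz2⟩ := haz
  have h1c : (0:ℝ) < 1 - c := by linarith
  have hγ1 : 1 < γ := by rw [hγ, lt_div_iff₀ h1c]; linarith
  have hγpos : (0:ℝ) < γ := by linarith
  have hlog : 0 < Real.log γ := Real.log_pos hγ1
  set θ := Real.log γ / 2 with hθdef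
  have hθ : 0 < θ := by positivity
  have hs2 : s ^ 2 = 1 - c ^ 2 := by rw [hs, Real.sq_sqrt (by nlinarith)]
  have hs0 : 0 < s := by rw [hs]; apply Real.sqrt_pos.mpr; nlinarith
  have hGt : ∀ t, G t = Real.tanh (θ * t) := by
    intro t
    rw [hG, my_tanh_eq]
    have hh : γ ^ t = Real.exp (2 * (θ * t)) := by
      rw [Real.rpow_def_of_pos hγpos]; congr 1; rw [hθdef]; ring
    rw [hh]
  have habs : ∀ t, |G t| < 1 := fun t => by rw [hGt]; exact my_abs_tanh_lt_one _
  have hpos : ∀ t, 0 < 1 + G t * az := by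
    intro t
    have h1 : |G t * az| < 1 := by
      rw [abs_mul]
      calc |G t| * |az| ≤ 1 * |az| :=
            mul_le_mul_of_nonneg_right (habs t).le (abs_nonneg az)
        _ = |az| := one_mul _
        _ < 1 := abs_lt.mpr ⟨haz1, haz2⟩
    have h2 := neg_abs_le (G t * az)
    linarith
  have hA2 : (0:ℝ) < 1 - az ^ 2 := by nlinarith
  have hcT : 0 < Real.cosh (θ * T) := Real.cosh_pos _
  have hpT := hpos T
  have hpTne : 1 + G T * az ≠ 0 := hpT.ne'
  have hρt : ∀ t, ρ t = s * Real.log γ / (4 * c) * Real.cosh (θ * t) := by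
    intro t
    rw [hρ, hGt, my_sqrt_one_sub_tanh_sq, one_div_one_div]
  have hker : ∀ t, ρa t * |(az + G t) / (1 + G t * az) - bz| =
      (s * Real.log γ / (4 * c) * (1 - az ^ 2) / ((1 + G T * az) * Real.cosh (θ * T))) *
        |Real.sinh (θ * (t - T))| := by
    intro t
    have hpt := hpos t
    have hct : 0 < Real.cosh (θ * t) := Real.cosh_pos _
    have hdiff : (az + G t) / (1 + G t * az) - bz =
        (G t - G T) * (1 - az ^ 2) / ((1 + G t * az) * (1 + G T * az)) := by
      rw [hbz, div_sub_div _ _ hpt.ne' hpT.ne']; congr 1; ring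
    have hsinh : Real.cosh (θ * t) * (G t - G T) = Real.sinh (θ * (t - T)) / Real.cosh (θ * T) := by
      rw [hGt, hGt, Real.tanh_eq_sinh_div_cosh, Real.tanh_eq_sinh_div_cosh,
        show θ * (t - T) = θ * t - θ * T by ring, Real.sinh_sub]
      field_simp
    have habsG : |G t - G T| = |Real.sinh (θ * (t - T))| / (Real.cosh (θ * t) * Real.cosh (θ * T)) := by
      have h := congrArg abs hsinh
      rw [abs_mul, abs_of_pos hct, abs_div, abs_of_pos hcT] at h
      field_simp at h ⊢
      linear_combination h
    rw [hρa, hρt, hdiff, abs_div, abs_mul, abs_of_pos hA2, abs_of_pos (mul_pos hpt hpT), habsG]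
    field_simp
  have hint : (∫ t in (-1:ℝ)..1, ρa t * |(az + G t) / (1 + G t * az) - bz|) =
      (s * Real.log γ / (4 * c) * (1 - az ^ 2) / ((1 + G T * az) * Real.cosh (θ * T))) *
        ((2 * Real.cosh θ * Real.cosh (θ * T) - 2) / θ) := by
    rw [intervalIntegral.integral_congr (fun t _ => hker t),
      intervalIntegral.integral_const_mul, my_integral_abs_sinh θ T hθ hT]
  have hsqγ : Real.sqrt γ = s / (1 - c) := by
    rw [show γ = (s / (1 - c)) ^ 2 by rw [div_pow, hs2, hγ]; field_simp; ring]
    exact Real.sqrt_sq (by positivity)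
  have hexpθ : Real.exp θ = s / (1 - c) := by
    have h2 : Real.exp θ ^ 2 = γ := by
      rw [sq, ← Real.exp_add, hθdef, show Real.log γ / 2 + Real.log γ / 2 = Real.log γ by ring,
        Real.exp_log hγpos]
    rw [← hsqγ, ← h2, Real.sqrt_sq (Real.exp_pos _).le]
  have hcoshθ : Real.cosh θ = 1 / s := by
    rw [Real.cosh_eq, Real.exp_neg, hexpθ]
    rw [div_eq_div_iff (by positivity) (by positivity)]
    field_simp
    nlinarith [hs2]
  have h1md : 1 - G T ^ 2 = 1 / Real.cosh (θ * T) ^ 2 := by rw [hGt]; exact my_one_sub_tanh_sq _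
  have hh : (1 - G T ^ 2) * Real.cosh (θ * T) ^ 2 = 1 := by
    rw [h1md]; field_simp
  have hbz2 : 1 - bz ^ 2 = (1 - az ^ 2) / (((1 + G T * az) * Real.cosh (θ * T)) ^ 2) := by
    rw [hbz, div_pow, one_sub_div (pow_ne_zero 2 hpTne),
      div_eq_div_iff (pow_ne_zero 2 hpTne) (pow_ne_zero 2 (mul_pos hpT hcT).ne')]
    linear_combination ((1 - az ^ 2) * (1 + G T * az) ^ 2) * hh
  have hsqb : Real.sqrt (1 - bz ^ 2) =
      Real.sqrt (1 - az ^ 2) / ((1 + G T * az) * Real.cosh (θ * T)) := by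
    rw [hbz2, Real.sqrt_div hA2.le, Real.sqrt_sq (by positivity)]
  have hSS : Real.sqrt (1 - az ^ 2) * Real.sqrt (1 - az ^ 2) = 1 - az ^ 2 :=
    Real.mul_self_sqrt hA2.le
  have hlogθ : Real.log γ = 2 * θ := by rw [hθdef]; ring
  rw [hint, hsqb, hbz, hlogθ, hcoshθ]
  have hPne' : 1 + az * G T ≠ 0 := by rw [mul_comm]; exact hpTne
  have e1 : s * √(1 - az ^ 2) * (√(1 - az ^ 2) / ((1 + G T * az) * Real.cosh (θ * T))) = s * (1 - az ^ 2) / ((1 + G T * az) * Real.cosh (θ * T)) := by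
    rw [mul_assoc, mul_div_assoc', hSS, mul_div_assoc]
  rw [e1]
  field_simp
  ring
end

section
/- Fix c ∈ [0,1), s = √(1-c²), a_z ∈ [-1,1], and b_z ∈ [-1,1] with b_z ≥ (a_z + c)/(1 + c·a_z). Then -(1-c) ≤ a_z·b_z + s·√(1-a_z²)·√(1-b_z²) - c·(1 - b_z + a_z) ≤ 1 - c. -/
open Real

private lemma bgs_aux_up (c az bz sv A B : ℝ) (hc0 : 0 ≤ c) (hc1 : c < 1)
    (ha1 : -1 ≤ az) (ha2 : az ≤ 1) (hb1 : -1 ≤ bz) (hb2 : bz ≤ 1)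
    (hA0 : 0 ≤ A) (hB0 : 0 ≤ B) (hs0 : 0 ≤ sv)
    (hA2 : A ^ 2 = 1 - az ^ 2) (hB2 : B ^ 2 = 1 - bz ^ 2)
    (hs2 : sv ^ 2 = 1 - c ^ 2) :
    sv * A * B ≤ (1 + c * az) - bz * (az + c) := by
  have hden : (0:ℝ) < 1 + c * az := by nlinarith
  have hP0 : 0 ≤ (1 + c * az) - bz * (az + c) := by
    rcases le_or_gt 0 (az + c) with h | h
    · nlinarith [mul_nonneg (by linarith : (0:ℝ) ≤ 1 - bz) h]
    · nlinarith [mul_nonneg (by linarith : (0:ℝ) ≤ 1 + bz) (by linarith : (0:ℝ) ≤ -(az + c))]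
  have hSAB : 0 ≤ sv * A * B := by positivity
  have hsq : (sv * A * B) ^ 2 ≤ ((1 + c * az) - bz * (az + c)) ^ 2 := by
    have : (sv * A * B) ^ 2 = (1 - c ^ 2) * (1 - az ^ 2) * (1 - bz ^ 2) := by
      rw [mul_pow, mul_pow, hA2, hB2, hs2]
    rw [this]
    nlinarith [sq_nonneg (bz * (1 + c * az) - (az + c))]
  have := Real.sqrt_le_sqrt hsq
  rwa [Real.sqrt_sq hSAB, Real.sqrt_sq hP0] at this

private lemma bgs_aux_low (c az bz sv A B : ℝ) (hc0 : 0 ≤ c) (hc1 : c < 1)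
    (ha1 : -1 ≤ az) (ha2 : az ≤ 1) (hb1 : -1 ≤ bz) (hb2 : bz ≤ 1)
    (hA0 : 0 ≤ A) (hB0 : 0 ≤ B) (hs0 : 0 ≤ sv)
    (hA2 : A ^ 2 = 1 - az ^ 2) (hB2 : B ^ 2 = 1 - bz ^ 2)
    (hs2 : sv ^ 2 = 1 - c ^ 2)
    (hK0 : 0 ≤ bz * (1 + c * az) - (az + c)) :
    2*c - c*bz + c*az - 1 - az*bz ≤ sv * A * B := by
  have hden : (0:ℝ) < 1 + c * az := by nlinarith
  have hSAB : 0 ≤ sv * A * B := by positivity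
  rcases le_or_gt (2*c - c*bz + c*az - 1 - az*bz) 0 with hD | hD
  · linarith
  · have hK1 : bz * (1 + c * az) - (az + c) ≤ (1 - c) * (1 - az) := by
      nlinarith [mul_nonneg (by linarith : (0:ℝ) ≤ 1 - bz) hden.le]
    have hKsq : (bz * (1 + c * az) - (az + c)) ^ 2 ≤ 4 * (1 - c) ^ 2 := by
      nlinarith [mul_nonneg (by nlinarith : (0:ℝ) ≤ 2*(1-c) - (bz * (1 + c * az) - (az + c)))
        (by linarith : (0:ℝ) ≤ 2*(1-c) + (bz * (1 + c * az) - (az + c)))]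
    have hsq : (2*c - c*bz + c*az - 1 - az*bz) ^ 2 ≤ (sv * A * B) ^ 2 := by
      have : (sv * A * B) ^ 2 = (1 - c ^ 2) * (1 - az ^ 2) * (1 - bz ^ 2) := by
        rw [mul_pow, mul_pow, hA2, hB2, hs2]
      rw [this]
      nlinarith [mul_nonneg (by linarith : (0:ℝ) ≤ 1 - c) hD.le]
    have h1 := Real.sqrt_le_sqrt hsq
    rwa [Real.sqrt_sq hD.le, Real.sqrt_sq hSAB] at h1

theorem bgs_outside_hardy_sector (c : ℝ) (hc : c ∈ Set.Ico (0:ℝ) 1)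
    (s : ℝ) (hs : s = Real.sqrt (1 - c ^ 2))
    (az : ℝ) (haz : az ∈ Set.Icc (-1 : ℝ) 1)
    (bz : ℝ) (hbz : bz ∈ Set.Icc (-1 : ℝ) 1)
    (hb : (az + c) / (1 + c * az) ≤ bz) :
    -(1 - c) ≤ az * bz + s * Real.sqrt (1 - az ^ 2) * Real.sqrt (1 - bz ^ 2)
        - c * (1 - bz + az) ∧
      az * bz + s * Real.sqrt (1 - az ^ 2) * Real.sqrt (1 - bz ^ 2)
        - c * (1 - bz + az) ≤ 1 - c := by
  obtain ⟨hc0, hc1⟩ := hc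
  obtain ⟨ha1, ha2⟩ := haz
  obtain ⟨hb1, hb2⟩ := hbz
  have hden : (0:ℝ) < 1 + c * az := by nlinarith
  have hK0 : 0 ≤ bz * (1 + c * az) - (az + c) := by
    rw [div_le_iff₀ hden] at hb; linarith
  have hA0 : 0 ≤ Real.sqrt (1 - az ^ 2) := Real.sqrt_nonneg _
  have hB0 : 0 ≤ Real.sqrt (1 - bz ^ 2) := Real.sqrt_nonneg _
  have hs0 : 0 ≤ s := hs ▸ Real.sqrt_nonneg _
  have hA2 : Real.sqrt (1 - az ^ 2) ^ 2 = 1 - az ^ 2 := Real.sq_sqrt (by nlinarith)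
  have hB2 : Real.sqrt (1 - bz ^ 2) ^ 2 = 1 - bz ^ 2 := Real.sq_sqrt (by nlinarith)
  have hs2 : s ^ 2 = 1 - c ^ 2 := hs ▸ Real.sq_sqrt (by nlinarith)
  have h1 := bgs_aux_up c az bz s _ _ hc0 hc1 ha1 ha2 hb1 hb2 hA0 hB0 hs0 hA2 hB2 hs2
  have h2 := bgs_aux_low c az bz s _ _ hc0 hc1 ha1 ha2 hb1 hb2 hA0 hB0 hs0 hA2 hB2 hs2 hK0
  constructor <;> linarith
end
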